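/- Strict-completeness of the rank-r Flammia-type measurement (matrix form): Let ρ = [[A, B†],[B, C]] be a PSD (p+m)×(p+m) complex block matrix whose leading p×p block A is invertible and with rank(ρ) ≤ p. If σ = [[A, B†],[B, D]] is PSD (i.e. σ agrees with ρ on the first p rows and columns) and Tr(σ) = Tr(ρ), then σ = ρ (equivalently D = C). -/

import Mathlib

open Matrix
open scoped ComplexOrder

private lemma psd_trace_zero_eq_zero {n : ℕ} {X : Matrix (Fin n) (Fin n) ℂ}
    (hX : X.PosSemidef) (h : X.trace = 0) : X = 0 := by
  have hquad : ∀ i, star (Pi.single i 1 : Fin n → ℂ) ⬝ᵥ X *ᵥ Pi.single i 1 = X i i := by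
    intro i
    simp [mulVec_single, dotProduct, Pi.single_apply]
  have hnn : ∀ i ∈ Finset.univ, (0 : ℂ) ≤ X i i := by
    intro i _
    rw [← hquad i]; exact hX.dotProduct_mulVec_nonneg _
  have hdiag : ∀ i, X i i = 0 := by
    have := (Finset.sum_eq_zero_iff_of_nonneg hnn).mp (by simpa [Matrix.trace, Matrix.diag] using h)
    intro i; exact this i (Finset.mem_univ i)
  have hcol : ∀ j, X *ᵥ Pi.single j 1 = 0 := by
    intro j
    exact (hX.dotProduct_mulVec_zero_iff _).mp (by rw [hquad]; exact hdiag j)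
  ext i j
  have := congrFun (hcol j) i
  simpa [mulVec_single] using this

/-- **Strict-completeness of the rank-r Flammia-type measurement (matrix form).**
Let `ρ = [[A, B†],[B, C]]` be PSD with invertible leading block `A` and `rank ρ ≤ p`.
If `σ = [[A, B†],[B, D]]` is PSD (it agrees with `ρ` on the first `p` rows and columns)
and `Tr σ = Tr ρ`, then `σ = ρ`, i.e. `D = C`. -/
theorem rankr_flammia_strictly_complete {p m : ℕ}
    (A : Matrix (Fin p) (Fin p) ℂ) (B : Matrix (Fin m) (Fin p) ℂ)
    (C D : Matrix (Fin m) (Fin m) ℂ)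
    (hA : IsUnit A)
    (hρ : (Matrix.fromBlocks A Bᴴ B C).PosSemidef)
    (hrank : (Matrix.fromBlocks A Bᴴ B C).rank ≤ p)
    (hσ : (Matrix.fromBlocks A Bᴴ B D).PosSemidef)
    (htr : (Matrix.fromBlocks A Bᴴ B D).trace = (Matrix.fromBlocks A Bᴴ B C).trace) :
    Matrix.fromBlocks A Bᴴ B D = Matrix.fromBlocks A Bᴴ B C := by
  obtain ⟨iA⟩ := hA.nonempty_invertible
  have hAd : IsUnit A.det := A.isUnit_iff_isUnit_det.mp hA
  set ρ : Matrix (Fin p ⊕ Fin m) (Fin p ⊕ Fin m) ℂ := Matrix.fromBlocks A Bᴴ B C with hρdef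
  set U : Matrix (Fin p ⊕ Fin m) (Fin m) ℂ := Matrix.fromRows (-(A⁻¹ * Bᴴ)) 1 with hUdef
  -- the kernel of ρ is contained in the range of U
  have hker_le : LinearMap.ker ρ.mulVecLin ≤ LinearMap.range U.mulVecLin := by
    rintro x hx
    rw [LinearMap.mem_ker] at hx
    have hx' : ρ *ᵥ x = 0 := hx
    rw [hρdef, Matrix.fromBlocks_mulVec] at hx'
    have htop : A *ᵥ (x ∘ Sum.inl) + Bᴴ *ᵥ (x ∘ Sum.inr) = 0 := by
      funext i
      exact congrFun hx' (Sum.inl i)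
    have hxl : x ∘ Sum.inl = -(A⁻¹ * Bᴴ) *ᵥ (x ∘ Sum.inr) := by
      have h1 : A *ᵥ (x ∘ Sum.inl) = -(Bᴴ *ᵥ (x ∘ Sum.inr)) := by
        rw [eq_neg_iff_add_eq_zero]; exact htop
      have h2 := congrArg (fun v => A⁻¹ *ᵥ v) h1
      rw [Matrix.neg_mulVec]
      simpa [Matrix.mulVec_mulVec, Matrix.nonsing_inv_mul A hAd, Matrix.mulVec_neg] using h2
    refine ⟨x ∘ Sum.inr, ?_⟩
    have : U *ᵥ (x ∘ Sum.inr) = x := by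
      funext i
      rw [hUdef, Matrix.fromRows_mulVec]
      cases i with
      | inl i => simp [← hxl]
      | inr i => simp
    simpa [Matrix.mulVecLin] using this
  -- dimension counts
  have hdom : Module.finrank ℂ ((Fin p ⊕ Fin m) → ℂ) = p + m := by
    simp [Module.finrank_pi]
  have hrank_nul := LinearMap.finrank_range_add_finrank_ker ρ.mulVecLin
  rw [hdom] at hrank_nul
  have hker_ge : m ≤ Module.finrank ℂ (LinearMap.ker ρ.mulVecLin) := by
    have : Matrix.rank ρ + Module.finrank ℂ (LinearMap.ker ρ.mulVecLin) = p + m := hrank_nul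
    omega
  have hUinj : LinearMap.ker U.mulVecLin = ⊥ := by
    rw [LinearMap.ker_eq_bot']
    intro y hy
    have : U *ᵥ y = 0 := hy
    have hbot : (1 : Matrix (Fin m) (Fin m) ℂ) *ᵥ y = 0 := by
      funext i
      have := congrFun this (Sum.inr i)
      simpa [hUdef, Matrix.fromRows_mulVec] using this
    simpa using hbot
  have hUrange : Module.finrank ℂ (LinearMap.range U.mulVecLin) = m := by
    have := LinearMap.finrank_range_add_finrank_ker U.mulVecLin
    rw [hUinj, finrank_bot] at this
    simpa [Module.finrank_pi] using this
  -- kernel equals range of U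
  have hker_eq : LinearMap.ker ρ.mulVecLin = LinearMap.range U.mulVecLin :=
    Submodule.eq_of_le_of_finrank_le hker_le (by rw [hUrange]; exact hker_ge)
  -- hence ρ * (U y) = 0 for all y, giving C = B * A⁻¹ * Bᴴ
  have hCeq : C = B * A⁻¹ * Bᴴ := by
    have hSy : ∀ y : Fin m → ℂ, (C - B * A⁻¹ * Bᴴ) *ᵥ y = 0 := by
      intro y
      have hmem : U *ᵥ y ∈ LinearMap.ker ρ.mulVecLin := by
        rw [hker_eq]; exact ⟨y, rfl⟩
      have h0 : ρ *ᵥ (U *ᵥ y) = 0 := hmem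
      rw [hρdef, Matrix.fromBlocks_mulVec] at h0
      have hl : (U *ᵥ y) ∘ Sum.inl = -(A⁻¹ * Bᴴ) *ᵥ y := by
        funext i; simp [hUdef, Matrix.fromRows_mulVec]
      have hr : (U *ᵥ y) ∘ Sum.inr = y := by
        funext i; simp [hUdef, Matrix.fromRows_mulVec]
      have hbot : B *ᵥ ((U *ᵥ y) ∘ Sum.inl) + C *ᵥ ((U *ᵥ y) ∘ Sum.inr) = 0 := by
        funext i; exact congrFun h0 (Sum.inr i)
      rw [hl, hr] at hbot
      rw [Matrix.neg_mulVec, Matrix.mulVec_neg, Matrix.mulVec_mulVec] at hbot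
      rw [Matrix.sub_mulVec, Matrix.mul_assoc, sub_eq_neg_add]
      exact hbot
    ext i j
    have := congrFun (hSy (Pi.single j 1)) i
    have h2 : (C - B * A⁻¹ * Bᴴ) i j = 0 := by
      simpa [Matrix.mulVec_single] using this
    have := sub_eq_zero.mp (by simpa [Matrix.sub_apply] using h2)
    simpa [Matrix.sub_apply] using this
  -- A is positive definite
  have hApsd : A.PosSemidef := by
    have := hσ.submatrix (Sum.inl : Fin p → Fin p ⊕ Fin m)
    have h' : (Matrix.fromBlocks A Bᴴ B D).submatrix Sum.inl Sum.inl = A := by ext i j; simp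
    rwa [h'] at this
  have hApd : A.PosDef := by
    refine Matrix.posDef_iff_dotProduct_mulVec.mpr ⟨hApsd.isHermitian, fun x hx => lt_of_le_of_ne (hApsd.dotProduct_mulVec_nonneg x) fun heq => hx ?_⟩
    have h0 : A *ᵥ x = 0 := (hApsd.dotProduct_mulVec_zero_iff x).mp heq.symm
    have := congrArg (fun v => A⁻¹ *ᵥ v) h0
    simpa [Matrix.mulVec_mulVec, Matrix.nonsing_inv_mul A hAd] using this
  -- Schur complement of σ is PSD
  have hσ' : (Matrix.fromBlocks A Bᴴ (Bᴴ)ᴴ D).PosSemidef := by simpa using hσ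
  have hSD : (D - B * A⁻¹ * Bᴴ).PosSemidef := by
    have := (Matrix.PosDef.fromBlocks₁₁ Bᴴ D hApd).mp hσ'
    simpa using this
  rw [← hCeq] at hSD
  -- trace of D - C is zero
  have htrb : ∀ X : Matrix (Fin m) (Fin m) ℂ,
      (Matrix.fromBlocks A Bᴴ B X).trace = A.trace + X.trace := by
    intro X
    simp [Matrix.trace, Matrix.diag, Fintype.sum_sum_type, Matrix.fromBlocks]
  have htr0 : (D - C).trace = 0 := by
    rw [htrb D, htrb C] at htr
    rw [Matrix.trace_sub, add_left_cancel htr, sub_self]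
  have hDC : D - C = 0 := psd_trace_zero_eq_zero hSD htr0
  have : D = C := sub_eq_zero.mp hDC
  rw [this]
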